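/- Let λ_1 < ⋯ < λ_N be positive integers greater than 10, and suppose M_1 := max_{0≤x≤2π} |∑_{j=1}^N sin(λ_j x)| ≤ N/100. Then there exist signs ε_1, …, ε_N ∈ {−1, +1} such that max_{0≤x≤2π} |∑_{j=1}^N sin((λ_j + ε_j)x)| ≥ cN for an absolute constant c > 0 (e.g. c = 1/20). -/

import Mathlib

open Real

/-- Integral of `cos (c x)^2` over `[π/6, 5π/6]` is at least `π/3 - 1/11` when `c ≥ 11`. -/
lemma cos_sq_integral_lower (c : ℝ) (hc : 11 ≤ c) :
    π/3 - 1/11 ≤ ∫ x in (π/6)..(5*π/6), Real.cos (c * x) ^ 2 := by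
  have hc0 : c ≠ 0 := by positivity
  rw [intervalIntegral.integral_comp_mul_left (fun u => Real.cos u ^ 2) hc0,
    integral_cos_sq]
  have h1 : |Real.cos (c * (5*π/6)) * Real.sin (c * (5*π/6))| ≤ 1 := by
    rw [abs_mul]
    calc |Real.cos (c * (5*π/6))| * |Real.sin (c * (5*π/6))| ≤ 1 * 1 := by
          gcongr <;> [exact Real.abs_cos_le_one _; exact Real.abs_sin_le_one _]
      _ = 1 := by ring
  have h2 : |Real.cos (c * (π/6)) * Real.sin (c * (π/6))| ≤ 1 := by
    rw [abs_mul]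
    calc |Real.cos (c * (π/6))| * |Real.sin (c * (π/6))| ≤ 1 * 1 := by
          gcongr <;> [exact Real.abs_cos_le_one _; exact Real.abs_sin_le_one _]
      _ = 1 := by ring
  rw [smul_eq_mul]
  have hπ : (0:ℝ) < π := Real.pi_pos
  have hA := abs_le.mp h1
  have hB := abs_le.mp h2
  have hinv : c⁻¹ ≤ 1/11 := by
    rw [inv_le_comm₀ (by linarith) (by norm_num)]
    linarith
  have hinv0 : 0 < c⁻¹ := by positivity
  have key : (Real.cos (c * (5*π/6)) * Real.sin (c * (5*π/6)) -
      Real.cos (c * (π/6)) * Real.sin (c * (π/6)) + c * (5*π/6) - c * (π/6)) / 2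
      ≥ c * (π/3) - 1 := by nlinarith
  have : c⁻¹ * (c * (π/3) - 1) ≤ c⁻¹ *
      ((Real.cos (c * (5*π/6)) * Real.sin (c * (5*π/6)) -
      Real.cos (c * (π/6)) * Real.sin (c * (π/6)) + c * (5*π/6) - c * (π/6)) / 2) := by
    apply mul_le_mul_of_nonneg_left key.le hinv0.le
  have hcc : c⁻¹ * (c * (π/3) - 1) = π/3 - c⁻¹ := by
    field_simp
  rw [hcc] at this
  linarith

/-- `sin x ≥ 1/2` on `[π/6, 5π/6]`. -/
lemma sin_ge_half {x : ℝ} (h1 : π/6 ≤ x) (h2 : x ≤ 5*π/6) : 1/2 ≤ Real.sin x := by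
  have hπ : (0:ℝ) < π := Real.pi_pos
  rcases le_total x (π/2) with hx | hx
  · have := Real.sin_le_sin_of_le_of_le_pi_div_two (by linarith) hx h1
    rwa [Real.sin_pi_div_six] at this
  · have h3 : π - x ≤ π/2 := by linarith
    have h4 : π/6 ≤ π - x := by linarith
    have := Real.sin_le_sin_of_le_of_le_pi_div_two (by linarith) h3 h4
    rw [Real.sin_pi_div_six, Real.sin_pi_sub] at this
    exact this

theorem perturbed_sin_sum_large (N : ℕ) (lam : Fin N → ℕ)
    (hmono : StrictMono lam) (hbig : ∀ j, 10 < lam j)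
    (hsmall : ∀ x ∈ Set.Icc (0:ℝ) (2*π),
      |∑ j, Real.sin ((lam j : ℝ) * x)| ≤ (N : ℝ)/100) :
    ∃ ε : Fin N → ℤ, (∀ j, ε j = 1 ∨ ε j = -1) ∧
      ∃ x ∈ Set.Icc (0:ℝ) (2*π),
        |∑ j, Real.sin ((((lam j : ℤ) + ε j : ℤ) : ℝ) * x)| ≥ (1/20) * N := by
  have hπ : (0:ℝ) < π := Real.pi_pos
  set g : ℝ → ℝ := fun x => ∑ j, Real.cos ((lam j : ℝ) * x) ^ 2 with hg
  have hgc : Continuous g := by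
    apply continuous_finset_sum
    intro j _
    exact (Real.continuous_cos.comp (continuous_const.mul continuous_id)).pow 2
  -- integral lower bound
  have hint : (N : ℝ) * (π/3 - 1/11) ≤ ∫ x in (π/6)..(5*π/6), g x := by
    have : (∫ x in (π/6)..(5*π/6), g x)
        = ∑ j, ∫ x in (π/6)..(5*π/6), Real.cos ((lam j : ℝ) * x) ^ 2 := by
      apply intervalIntegral.integral_finset_sum
      intro j _
      exact ((Real.continuous_cos.comp (continuous_const.mul continuous_id)).pow 2).intervalIntegrable _ _
    rw [this]
    calc (N : ℝ) * (π/3 - 1/11) = ∑ _j : Fin N, (π/3 - 1/11) := by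
          simp [Finset.sum_const, mul_comm]; ring
      _ ≤ ∑ j, ∫ x in (π/6)..(5*π/6), Real.cos ((lam j : ℝ) * x) ^ 2 := by
          apply Finset.sum_le_sum
          intro j _
          apply cos_sq_integral_lower
          have := hbig j
          have : (11:ℝ) ≤ (lam j : ℝ) := by exact_mod_cast this
          exact this
  -- max point
  have hab : π/6 ≤ 5*π/6 := by linarith
  obtain ⟨x₀, hx₀, hmax⟩ := isCompact_Icc.exists_isMaxOn
    (Set.nonempty_Icc.2 hab) hgc.continuousOn
  have hx₀1 : π/6 ≤ x₀ := hx₀.1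
  have hx₀2 : x₀ ≤ 5*π/6 := hx₀.2
  -- integral upper bound by max
  have hup : (∫ x in (π/6)..(5*π/6), g x) ≤ (2*π/3) * g x₀ := by
    have : (∫ x in (π/6)..(5*π/6), g x) ≤ ∫ _x in (π/6)..(5*π/6), g x₀ := by
      apply intervalIntegral.integral_mono_on hab
        (hgc.intervalIntegrable _ _) (intervalIntegrable_const)
      intro x hx
      exact hmax hx
    rw [intervalIntegral.integral_const, smul_eq_mul] at this
    calc (∫ x in (π/6)..(5*π/6), g x) ≤ (5*π/6 - π/6) * g x₀ := this
      _ = (2*π/3) * g x₀ := by ring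
  have hgx₀ : (2*π/3) * g x₀ ≥ (N : ℝ) * (π/3 - 1/11) := le_trans hint hup
  -- choose signs
  set ε : Fin N → ℤ := fun j => if 0 ≤ Real.cos ((lam j : ℝ) * x₀) then 1 else -1 with hε
  refine ⟨ε, fun j => by by_cases h : 0 ≤ Real.cos ((lam j : ℝ) * x₀) <;> simp [hε, h], ?_⟩
  refine ⟨x₀, ⟨by linarith, by linarith⟩, ?_⟩
  -- rewrite each term
  have hterm : ∀ j, Real.sin ((((lam j : ℤ) + ε j : ℤ) : ℝ) * x₀)
      = Real.sin ((lam j : ℝ) * x₀) * Real.cos x₀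
        + (ε j : ℝ) * Real.cos ((lam j : ℝ) * x₀) * Real.sin x₀ := by
    intro j
    rcases (by by_cases h : 0 ≤ Real.cos ((lam j : ℝ) * x₀) <;> simp [hε, h] :
        ε j = 1 ∨ ε j = -1) with h | h <;> rw [h] <;> push_cast
    · rw [add_mul, Real.sin_add]; ring
    · rw [sub_eq_add_neg] at *
      have : ((lam j : ℝ) + -1) * x₀ = (lam j : ℝ) * x₀ - x₀ := by ring
      rw [this, Real.sin_sub]; ring
  have hsum : (∑ j, Real.sin ((((lam j : ℤ) + ε j : ℤ) : ℝ) * x₀))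
      = (∑ j, Real.sin ((lam j : ℝ) * x₀)) * Real.cos x₀
        + (∑ j, (ε j : ℝ) * Real.cos ((lam j : ℝ) * x₀)) * Real.sin x₀ := by
    rw [Finset.sum_mul, Finset.sum_mul, ← Finset.sum_add_distrib]
    exact Finset.sum_congr rfl fun j _ => hterm j
  -- key lower bounds
  have habs : ∀ j, (ε j : ℝ) * Real.cos ((lam j : ℝ) * x₀)
      ≥ Real.cos ((lam j : ℝ) * x₀) ^ 2 := by
    intro j
    set c := Real.cos ((lam j : ℝ) * x₀) with hc
    have hc1 : |c| ≤ 1 := Real.abs_cos_le_one _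
    by_cases h : 0 ≤ c
    · have : ε j = 1 := by simp [hε, ← hc, h]
      rw [this]; push_cast
      nlinarith [abs_le.mp hc1]
    · have : ε j = -1 := by simp [hε, ← hc, h]
      rw [this]; push_cast
      nlinarith [abs_le.mp hc1]
  have hsum2 : (∑ j, (ε j : ℝ) * Real.cos ((lam j : ℝ) * x₀)) ≥ g x₀ :=
    Finset.sum_le_sum fun j _ => habs j
  have hsin : 1/2 ≤ Real.sin x₀ := sin_ge_half hx₀1 hx₀2
  have hS : |∑ j, Real.sin ((lam j : ℝ) * x₀)| ≤ (N : ℝ)/100 :=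
    hsmall x₀ ⟨by linarith, by linarith⟩
  have hcos : |Real.cos x₀| ≤ 1 := Real.abs_cos_le_one _
  -- put it together
  have hT : (∑ j, Real.sin ((((lam j : ℤ) + ε j : ℤ) : ℝ) * x₀)) ≥ (1/20) * N := by
    rw [hsum]
    have h1 : (∑ j, Real.sin ((lam j : ℝ) * x₀)) * Real.cos x₀ ≥ -((N : ℝ)/100) := by
      have := abs_le.mp hS
      have := abs_le.mp hcos
      nlinarith
    have hg0 : 0 ≤ g x₀ := Finset.sum_nonneg fun j _ => sq_nonneg _
    have h2 : (∑ j, (ε j : ℝ) * Real.cos ((lam j : ℝ) * x₀)) * Real.sin x₀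
        ≥ (1/2) * g x₀ := by nlinarith [Real.sin_le_one x₀]
    -- from hgx₀ : (2π/3) g x₀ ≥ N (π/3 − 1/11), derive g x₀ ≥ 0.4 N say
    have hπ4 : π < 3.15 := by linarith [Real.pi_lt_d2]
    have hπ3 : 3.14 < π := by linarith [Real.pi_gt_d6]
    have hN0 : (0:ℝ) ≤ N := Nat.cast_nonneg N
    nlinarith [hgx₀]
  calc |∑ j, Real.sin ((((lam j : ℤ) + ε j : ℤ) : ℝ) * x₀)|
      ≥ ∑ j, Real.sin ((((lam j : ℤ) + ε j : ℤ) : ℝ) * x₀) := le_abs_self _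
    _ ≥ (1/20) * N := hT
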